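/- Let G be the group with presentation ⟨x, y, t | x^t = x^p, y^{t^{-1}} = y^p, [x,y] = 1, [[x, y^{j t^i}], x] = 1 for all i,j ∈ ℤ⟩, where p is a prime. Then the normal closure H of {x, y} in G is metabelian, and G is solvable of derived length at most 3. -/

import Mathlib

/-- The commutator `[a,b] = a⁻¹b⁻¹ab`. -/
def br {G : Type*} [Group G] (a b : G) : G := a⁻¹ * b⁻¹ * a * b

/-- Conjugation `a^b = b⁻¹ab`. -/
def cnj {G : Type*} [Group G] (a b : G) : G := b⁻¹ * a * b

namespace MikhailovGroup

/-- The generator `x` of the free group on three letters. -/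
def X : FreeGroup (Fin 3) := FreeGroup.of 0

/-- The generator `y` of the free group on three letters. -/
def Y : FreeGroup (Fin 3) := FreeGroup.of 1

/-- The generator `t` of the free group on three letters. -/
def T : FreeGroup (Fin 3) := FreeGroup.of 2

/-- The relations `x^t = x^p`, `y^{t⁻¹} = y^p`, `[x,y] = 1`, and
`[[x, y^{j t^i}], x] = 1` for all `i, j ∈ ℤ`. -/
def rels (p : ℕ) : Set (FreeGroup (Fin 3)) :=
  {cnj X T * (X ^ p)⁻¹, cnj Y T⁻¹ * (Y ^ p)⁻¹, br X Y} ∪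
    ⋃ (i : ℤ) (j : ℤ), {br (br X (cnj (Y ^ j) (T ^ i))) X}

/-- The group `G = ⟨x, y, t | x^t = x^p, y^{t⁻¹} = y^p, [x,y] = 1,
[[x, y^{j t^i}], x] = 1 (i,j ∈ ℤ)⟩`. -/
def G (p : ℕ) : Type := PresentedGroup (rels p)

instance (p : ℕ) : Group (G p) := by unfold G; infer_instance

/-- The image of the generator `x` in `G`. -/
def x (p : ℕ) : G p := PresentedGroup.of 0

/-- The image of the generator `y` in `G`. -/
def y (p : ℕ) : G p := PresentedGroup.of 1

/-- The image of the generator `t` in `G`. -/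
def t (p : ℕ) : G p := PresentedGroup.of 2

/-- The normal closure `H = ⟨x, y⟩^G`. -/
def H (p : ℕ) : Subgroup (G p) := Subgroup.normalClosure {x p, y p}

end MikhailovGroup

/-! ### Generic group lemmas -/

section Generic

variable {Γ : Type*} [Group Γ]

lemma br_eq_one_iff (a b : Γ) : br a b = 1 ↔ Commute a b := by
  have h : br a b = (b * a)⁻¹ * (a * b) := by rw [br]; group
  rw [h, inv_mul_eq_one, commute_iff_eq, eq_comm]

lemma conj_zpow' (w a : Γ) (n : ℤ) : (w⁻¹ * a * w) ^ n = w⁻¹ * a ^ n * w := by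
  simpa using conj_zpow (i := n) (a := w⁻¹) (b := a)

lemma conj_pow' (w a : Γ) (n : ℕ) : (w⁻¹ * a * w) ^ n = w⁻¹ * a ^ n * w := by
  simpa using conj_pow (i := n) (a := w⁻¹) (b := a)

lemma commute_conj {a b : Γ} (w : Γ) (h : Commute a b) :
    Commute (w⁻¹ * a * w) (w⁻¹ * b * w) := by
  rw [commute_iff_eq]
  calc w⁻¹ * a * w * (w⁻¹ * b * w) = w⁻¹ * (a * b) * w := by group
    _ = w⁻¹ * (b * a) * w := by rw [h.eq]
    _ = w⁻¹ * b * w * (w⁻¹ * a * w) := by group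

lemma conj_br (w a b : Γ) : w⁻¹ * br a b * w = br (w⁻¹ * a * w) (w⁻¹ * b * w) := by
  rw [br, br]; group

lemma closure_comm {s : Set Γ} (hs : ∀ a ∈ s, ∀ b ∈ s, Commute a b) :
    ∀ a ∈ Subgroup.closure s, ∀ b ∈ Subgroup.closure s, Commute a b := by
  have step : ∀ a ∈ s, ∀ b ∈ Subgroup.closure s, Commute a b := by
    intro a ha b hb
    induction hb using Subgroup.closure_induction with
    | mem c hc => exact hs a ha c hc
    | one => exact Commute.one_right a
    | mul c d _ _ hc hd => exact hc.mul_right hd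
    | inv c _ hc => exact hc.inv_right
  intro a ha
  induction ha using Subgroup.closure_induction with
  | mem c hc => exact step c hc
  | one => exact fun b _ => Commute.one_left b
  | mul c d _ _ hc hd => exact fun b hb => (hc b hb).mul_left (hd b hb)
  | inv c _ hc => exact fun b hb => (hc b hb).inv_left

lemma conj_mem_closure {s : Set Γ} (w : Γ)
    (h : ∀ a ∈ s, w⁻¹ * a * w ∈ Subgroup.closure s) :
    ∀ g ∈ Subgroup.closure s, w⁻¹ * g * w ∈ Subgroup.closure s := by
  intro g hg
  induction hg using Subgroup.closure_induction with
  | mem c hc => exact h c hc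
  | one => simpa using one_mem _
  | mul c d _ _ hc hd =>
      have : w⁻¹ * (c * d) * w = (w⁻¹ * c * w) * (w⁻¹ * d * w) := by group
      rw [this]; exact mul_mem hc hd
  | inv c _ hc =>
      have : w⁻¹ * c⁻¹ * w = (w⁻¹ * c * w)⁻¹ := by group
      rw [this]; exact inv_mem hc

end Generic

/-! ### The Mikhailov group -/

namespace MikhailovAux
open MikhailovGroup Subgroup

variable (p : ℕ)

def μ : FreeGroup (Fin 3) →* G p := PresentedGroup.mk (rels p)

lemma muX : μ p X = x p := rfl
lemma muY : μ p Y = y p := rfl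
lemma muT : μ p T = t p := rfl

lemma rel_one {r : FreeGroup (Fin 3)} (hr : r ∈ rels p) : μ p r = 1 := by
  show (QuotientGroup.mk r : PresentedGroup (rels p)) = 1
  rw [QuotientGroup.eq_one_iff]
  exact Subgroup.subset_normalClosure hr

lemma rel1 : (t p)⁻¹ * x p * t p = x p ^ p := by
  have h := rel_one p (show cnj X T * (X ^ p)⁻¹ ∈ rels p from
    Set.mem_union_left _ (Set.mem_insert _ _))
  simpa only [cnj, map_mul, map_inv, map_pow, muX, muT, mul_inv_eq_one] using h

lemma rel2 : t p * y p * (t p)⁻¹ = y p ^ p := by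
  have h := rel_one p (show cnj Y T⁻¹ * (Y ^ p)⁻¹ ∈ rels p from
    Set.mem_union_left _ (Set.mem_insert_of_mem _ (Set.mem_insert _ _)))
  simpa only [cnj, map_mul, map_inv, map_pow, muY, muT, inv_inv, mul_inv_eq_one] using h

lemma rel3 : Commute (x p) (y p) := by
  have h := rel_one p (show br X Y ∈ rels p from
    Set.mem_union_left _ (Set.mem_insert_of_mem _ (Set.mem_insert_of_mem _ rfl)))
  rw [show μ p (br X Y) = br (x p) (y p) from by
    simp only [br, map_mul, map_inv, muX, muY]] at h
  exact (br_eq_one_iff _ _).1 h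

/-- `u i = x^{t^i}`. -/
def u (i : ℤ) : G p := (t p ^ i)⁻¹ * x p * t p ^ i

/-- `v i = y^{t^i}`. -/
def v (i : ℤ) : G p := (t p ^ i)⁻¹ * y p * t p ^ i

lemma u_zero : u p 0 = x p := by simp [u]

lemma v_zero : v p 0 = y p := by simp [v]

lemma u_shift (k j : ℤ) : (t p ^ j)⁻¹ * u p k * t p ^ j = u p (k + j) := by
  rw [u, u]; group

lemma v_shift (k j : ℤ) : (t p ^ j)⁻¹ * v p k * t p ^ j = v p (k + j) := by
  rw [v, v]; group

lemma rel4 (i j : ℤ) : Commute (br (x p) (v p i ^ j)) (x p) := by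
  have hm : br (br X (cnj (Y ^ j) (T ^ i))) X ∈ rels p :=
    Set.mem_union_right _ (Set.mem_iUnion.2 ⟨i, Set.mem_iUnion.2 ⟨j, rfl⟩⟩)
  have h := rel_one p hm
  rw [show μ p (br (br X (cnj (Y ^ j) (T ^ i))) X)
      = br (br (x p) (v p i ^ j)) (x p) from by
    simp only [br, cnj, map_mul, map_inv, map_zpow, muX, muY, muT, v, conj_zpow']] at h
  exact (br_eq_one_iff _ _).1 h

lemma rel4' (k i j : ℤ) : Commute (br (u p k) (v p i ^ j)) (u p k) := by
  have h0 := rel4 p (i - k) j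
  have h := commute_conj (t p ^ k) h0
  rwa [conj_br, ← conj_zpow', v_shift, sub_add_cancel,
    show (t p ^ k)⁻¹ * x p * t p ^ k = u p k from rfl] at h

lemma u_succ (k : ℤ) : u p (k + 1) = u p k ^ p := by
  calc u p (k + 1) = (t p ^ k)⁻¹ * ((t p)⁻¹ * x p * t p) * t p ^ k := by rw [u]; group
    _ = (t p ^ k)⁻¹ * x p ^ p * t p ^ k := by rw [rel1]
    _ = u p k ^ p := by rw [u, conj_pow']

lemma v_pred (k : ℤ) : v p (k - 1) = v p k ^ p := by
  calc v p (k - 1) = (t p ^ k)⁻¹ * (t p * y p * (t p)⁻¹) * t p ^ k := by rw [v]; group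
    _ = (t p ^ k)⁻¹ * y p ^ p * t p ^ k := by rw [rel2]
    _ = v p k ^ p := by rw [v, conj_pow']

lemma u_add_nat (i : ℤ) (k : ℕ) : u p (i + k) = u p i ^ p ^ k := by
  induction k with
  | zero => simp
  | succ n ih =>
      have h : (i + ((n + 1 : ℕ) : ℤ)) = (i + n) + 1 := by push_cast; ring
      rw [h, u_succ, ih, ← pow_mul, pow_succ]

lemma v_sub_nat (i : ℤ) (k : ℕ) : v p (i - k) = v p i ^ p ^ k := by
  induction k with
  | zero => simp
  | succ n ih =>
      have h : (i - ((n + 1 : ℕ) : ℤ)) = (i - n) - 1 := by push_cast; ring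
      rw [h, v_pred, ih, ← pow_mul, pow_succ]

lemma v_pow_of_le {i I : ℤ} (h : i ≤ I) : v p i = v p I ^ p ^ (I - i).toNat := by
  have h2 : I - ((I - i).toNat : ℤ) = i := by
    rw [Int.toNat_of_nonneg (sub_nonneg.2 h)]; ring
  rw [← v_sub_nat, h2]

lemma u_pow_of_le {i I : ℤ} (h : I ≤ i) : u p i = u p I ^ p ^ (i - I).toNat := by
  have h2 : I + ((i - I).toNat : ℤ) = i := by
    rw [Int.toNat_of_nonneg (sub_nonneg.2 h)]; ring
  rw [← u_add_nat, h2]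

lemma commute_v (i j : ℤ) : Commute (v p i) (v p j) := by
  rcases le_total i j with h | h
  · rw [v_pow_of_le p h]; exact (Commute.refl _).pow_left _
  · rw [v_pow_of_le p h]; exact (Commute.refl _).pow_right _

/-- The subgroup generated by the `v i`. -/
def B : Subgroup (G p) := closure (Set.range (v p))

lemma B_form : ∀ c ∈ B p, ∃ I n : ℤ, c = v p I ^ n := by
  intro c hc
  induction hc using Subgroup.closure_induction with
  | mem c hc => obtain ⟨i, rfl⟩ := hc; exact ⟨i, 1, (zpow_one _).symm⟩
  | one => exact ⟨0, 0, (zpow_zero _).symm⟩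
  | mul a b _ _ ha hb =>
      obtain ⟨I, n, rfl⟩ := ha
      obtain ⟨I', n', rfl⟩ := hb
      refine ⟨max I I', ((p : ℤ) ^ (max I I' - I).toNat) * n
        + ((p : ℤ) ^ (max I I' - I').toNat) * n', ?_⟩
      rw [v_pow_of_le p (le_max_left I I'), v_pow_of_le p (le_max_right I I'),
        ← zpow_natCast (v p (max I I')) (p ^ (max I I' - I).toNat),
        ← zpow_natCast (v p (max I I')) (p ^ (max I I' - I').toNat),
        ← zpow_mul, ← zpow_mul, ← zpow_add]
      push_cast
      ring_nf
  | inv a _ ha =>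
      obtain ⟨I, n, rfl⟩ := ha
      exact ⟨I, -n, by rw [zpow_neg]⟩

lemma core_commute (m : ℤ) {c : G p} (hc : c ∈ B p) :
    Commute (u p m) (c⁻¹ * u p m * c) := by
  obtain ⟨I, n, rfl⟩ := B_form p c hc
  have hd : Commute (u p m) (br (u p m) (v p I ^ n)) := (rel4' p m I n).symm
  have key : (v p I ^ n)⁻¹ * u p m * v p I ^ n = u p m * br (u p m) (v p I ^ n) := by
    rw [br]; group
  rw [key]
  exact (Commute.refl _).mul_right hd

/-- Generating set of the normal closure of `x`. -/
def S : Set (G p) := {g | ∃ (k : ℤ) (c : G p), c ∈ B p ∧ g = c⁻¹ * u p k * c}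

lemma S_commute : ∀ s ∈ S p, ∀ s' ∈ S p, Commute s s' := by
  rintro _ ⟨k, c, hc, rfl⟩ _ ⟨l, c', hc', rfl⟩
  have hk : u p k = u p (min k l) ^ p ^ (k - min k l).toNat := u_pow_of_le p (min_le_left k l)
  have hl : u p l = u p (min k l) ^ p ^ (l - min k l).toNat := u_pow_of_le p (min_le_right k l)
  have base : Commute (c⁻¹ * u p (min k l) * c) (c'⁻¹ * u p (min k l) * c') := by
    have he : c' * c⁻¹ ∈ B p := mul_mem hc' (inv_mem hc)
    have h3 := core_commute p (min k l) he
    have h4 := commute_conj c h3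
    have h5 : c⁻¹ * ((c' * c⁻¹)⁻¹ * u p (min k l) * (c' * c⁻¹)) * c
        = c'⁻¹ * u p (min k l) * c' := by group
    rwa [h5] at h4
  rw [hk, hl, ← conj_pow', ← conj_pow']
  exact base.pow_pow _ _

/-- The normal closure of `x`, described explicitly. -/
def N : Subgroup (G p) := closure (S p)

lemma N_comm : ∀ a ∈ N p, ∀ b ∈ N p, Commute a b := closure_comm (S_commute p)

lemma x_mem_S : x p ∈ S p := ⟨0, 1, one_mem _, by simp [u_zero]⟩

lemma x_mem_N : x p ∈ N p := subset_closure (x_mem_S p)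

lemma y_mem_range_v : y p ∈ Set.range (v p) := ⟨0, v_zero p⟩

lemma S_conj_t : ∀ s ∈ S p, (t p)⁻¹ * s * t p ∈ S p := by
  rintro _ ⟨k, c, hc, rfl⟩
  have hcB : (t p)⁻¹ * c * t p ∈ B p := by
    refine conj_mem_closure (t p) ?_ c hc
    rintro _ ⟨i, rfl⟩
    have h := v_shift p i 1
    rw [zpow_one] at h
    rw [h]; exact subset_closure ⟨i + 1, rfl⟩
  refine ⟨k + 1, (t p)⁻¹ * c * t p, hcB, ?_⟩
  have h := u_shift p k 1
  rw [zpow_one] at h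
  rw [← h]; group

lemma S_conj_t' : ∀ s ∈ S p, t p * s * (t p)⁻¹ ∈ S p := by
  rintro _ ⟨k, c, hc, rfl⟩
  have hcB : t p * c * (t p)⁻¹ ∈ B p := by
    have h := conj_mem_closure ((t p)⁻¹) ?_ c hc
    · simpa [B] using h
    · rintro _ ⟨i, rfl⟩
      have h := v_shift p i (-1)
      rw [zpow_neg_one, inv_inv] at h
      rw [inv_inv, h]; exact subset_closure ⟨i + -1, rfl⟩
  refine ⟨k + -1, t p * c * (t p)⁻¹, hcB, ?_⟩
  have h := u_shift p k (-1)
  rw [zpow_neg_one, inv_inv] at h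
  rw [← h]; group

lemma S_conj_y : ∀ s ∈ S p, (y p)⁻¹ * s * y p ∈ S p := by
  rintro _ ⟨k, c, hc, rfl⟩
  exact ⟨k, c * y p, mul_mem hc (subset_closure (y_mem_range_v p)), by group⟩

lemma S_conj_y' : ∀ s ∈ S p, y p * s * (y p)⁻¹ ∈ S p := by
  rintro _ ⟨k, c, hc, rfl⟩
  exact ⟨k, c * (y p)⁻¹, mul_mem hc (inv_mem (subset_closure (y_mem_range_v p))), by group⟩

lemma S_conj_x : ∀ s ∈ S p, (x p)⁻¹ * s * x p ∈ S p := by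
  intro s hs
  have hcom : Commute s (x p) := S_commute p s hs (x p) (x_mem_S p)
  have h : (x p)⁻¹ * s * x p = s := by
    rw [mul_assoc, hcom.eq, inv_mul_cancel_left]
  rw [h]; exact hs

lemma S_conj_x' : ∀ s ∈ S p, x p * s * (x p)⁻¹ ∈ S p := by
  intro s hs
  have hcom : Commute s ((x p)⁻¹) := (S_commute p s hs (x p) (x_mem_S p)).inv_right
  have h : x p * s * (x p)⁻¹ = s := by
    rw [mul_assoc, hcom.eq, mul_inv_cancel_left]
  rw [h]; exact hs

lemma N_conj (w : G p) (h : ∀ s ∈ S p, w⁻¹ * s * w ∈ S p) :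
    ∀ g ∈ N p, w⁻¹ * g * w ∈ N p :=
  conj_mem_closure w (fun s hs => subset_closure (h s hs))

/-- The subgroup of elements normalizing `N` (in both directions). -/
def stab : Subgroup (G p) where
  carrier := {g | (∀ n ∈ N p, g⁻¹ * n * g ∈ N p) ∧ (∀ n ∈ N p, g * n * g⁻¹ ∈ N p)}
  one_mem' := by simp
  mul_mem' := by
    rintro a b ⟨ha1, ha2⟩ ⟨hb1, hb2⟩
    constructor
    · intro n hn
      rw [show (a * b)⁻¹ * n * (a * b) = b⁻¹ * (a⁻¹ * n * a) * b from by group]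
      exact hb1 _ (ha1 n hn)
    · intro n hn
      rw [show (a * b) * n * (a * b)⁻¹ = a * (b * n * b⁻¹) * a⁻¹ from by group]
      exact ha2 _ (hb2 n hn)
  inv_mem' := by
    rintro a ⟨ha1, ha2⟩
    constructor
    · intro n hn; rw [show a⁻¹⁻¹ * n * a⁻¹ = a * n * a⁻¹ from by rw [inv_inv]]
      exact ha2 n hn
    · intro n hn; rw [show a⁻¹ * n * a⁻¹⁻¹ = a⁻¹ * n * a from by rw [inv_inv]]
      exact ha1 n hn

lemma mem_stab (g : G p) : g ∈ stab p := by
  refine PresentedGroup.generated_by (rels p) (stab p) ?_ g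
  intro j
  fin_cases j
  · show x p ∈ stab p
    constructor
    · exact N_conj p (x p) (S_conj_x p)
    · intro n hn
      rw [show x p * n * (x p)⁻¹ = ((x p)⁻¹)⁻¹ * n * (x p)⁻¹ from by rw [inv_inv]]
      exact N_conj p ((x p)⁻¹) (by intro s hs; rw [inv_inv]; exact S_conj_x' p s hs) n hn
  · show y p ∈ stab p
    constructor
    · exact N_conj p (y p) (S_conj_y p)
    · intro n hn
      rw [show y p * n * (y p)⁻¹ = ((y p)⁻¹)⁻¹ * n * (y p)⁻¹ from by rw [inv_inv]]
      exact N_conj p ((y p)⁻¹) (by intro s hs; rw [inv_inv]; exact S_conj_y' p s hs) n hn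
  · show t p ∈ stab p
    constructor
    · exact N_conj p (t p) (S_conj_t p)
    · intro n hn
      rw [show t p * n * (t p)⁻¹ = ((t p)⁻¹)⁻¹ * n * (t p)⁻¹ from by rw [inv_inv]]
      exact N_conj p ((t p)⁻¹) (by intro s hs; rw [inv_inv]; exact S_conj_t' p s hs) n hn

instance N_normal : (N p).Normal := ⟨fun n hn g => (mem_stab p g).2 n hn⟩

/-! ### The quotient `G ⧸ N` -/

def φ : G p →* G p ⧸ N p := QuotientGroup.mk' (N p)

lemma phi_surj : Function.Surjective (φ p) := QuotientGroup.mk'_surjective (N p)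

def vb (i : ℤ) : G p ⧸ N p := φ p (v p i)

/-- The image of `H` in `G ⧸ N`. -/
def A : Subgroup (G p ⧸ N p) := closure (Set.range (vb p))

lemma A_comm : ∀ a ∈ A p, ∀ b ∈ A p, Commute a b := by
  refine closure_comm ?_
  rintro _ ⟨i, rfl⟩ _ ⟨j, rfl⟩
  exact (commute_v p i j).map (φ p)

lemma phi_x : φ p (x p) = 1 := by
  have : x p ∈ (φ p).ker := by
    rw [φ, QuotientGroup.ker_mk']; exact x_mem_N p
  exact this

lemma phi_y : φ p (y p) = vb p 0 := by rw [vb, v_zero]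

lemma A_conj_vb0 : ∀ a ∈ A p, (vb p 0)⁻¹ * a * vb p 0 ∈ A p := by
  intro a ha
  have h0 : vb p 0 ∈ A p := subset_closure ⟨0, rfl⟩
  have hcom := A_comm p a ha (vb p 0) h0
  rw [mul_assoc, hcom.eq, inv_mul_cancel_left]
  exact ha

def stabA : Subgroup (G p ⧸ N p) where
  carrier := {q | (∀ a ∈ A p, q⁻¹ * a * q ∈ A p) ∧ (∀ a ∈ A p, q * a * q⁻¹ ∈ A p)}
  one_mem' := by simp
  mul_mem' := by
    rintro a b ⟨ha1, ha2⟩ ⟨hb1, hb2⟩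
    constructor
    · intro n hn
      rw [show (a * b)⁻¹ * n * (a * b) = b⁻¹ * (a⁻¹ * n * a) * b from by group]
      exact hb1 _ (ha1 n hn)
    · intro n hn
      rw [show (a * b) * n * (a * b)⁻¹ = a * (b * n * b⁻¹) * a⁻¹ from by group]
      exact ha2 _ (hb2 n hn)
  inv_mem' := by
    rintro a ⟨ha1, ha2⟩
    constructor
    · intro n hn; rw [show a⁻¹⁻¹ * n * a⁻¹ = a * n * a⁻¹ from by rw [inv_inv]]
      exact ha2 n hn
    · intro n hn; rw [show a⁻¹ * n * a⁻¹⁻¹ = a⁻¹ * n * a from by rw [inv_inv]]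
      exact ha1 n hn

lemma vb_shift (i : ℤ) : (φ p (t p))⁻¹ * vb p i * φ p (t p) = vb p (i + 1) := by
  have h := v_shift p i 1
  rw [zpow_one] at h
  rw [vb, vb, ← h]
  simp [map_mul, map_inv]

lemma vb_shift' (i : ℤ) : φ p (t p) * vb p i * (φ p (t p))⁻¹ = vb p (i + -1) := by
  have h := v_shift p i (-1)
  rw [zpow_neg_one, inv_inv] at h
  rw [vb, vb, ← h]
  simp [map_mul, map_inv]

lemma mem_stabA (q : G p ⧸ N p) : q ∈ stabA p := by
  obtain ⟨g, rfl⟩ := phi_surj p q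
  have hgen : ∀ j : Fin 3, PresentedGroup.of j ∈ (stabA p).comap (φ p) := by
    intro j
    fin_cases j
    · show φ p (x p) ∈ stabA p
      rw [phi_x]
      exact one_mem _
    · show φ p (y p) ∈ stabA p
      rw [phi_y]
      constructor
      · exact A_conj_vb0 p
      · intro a ha
        have h0 : vb p 0 ∈ A p := subset_closure ⟨0, rfl⟩
        have hcom := A_comm p (vb p 0) h0 a ha
        rw [hcom.eq, mul_inv_cancel_right]
        exact ha
    · show φ p (t p) ∈ stabA p
      constructor
      · refine conj_mem_closure _ ?_
        rintro _ ⟨i, rfl⟩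
        rw [vb_shift]; exact subset_closure ⟨i + 1, rfl⟩
      · intro a ha
        rw [show φ p (t p) * a * (φ p (t p))⁻¹
            = ((φ p (t p))⁻¹)⁻¹ * a * (φ p (t p))⁻¹ from by rw [inv_inv]]
        refine conj_mem_closure _ ?_ a ha
        rintro _ ⟨i, rfl⟩
        rw [inv_inv, vb_shift']; exact subset_closure ⟨i + -1, rfl⟩
  exact PresentedGroup.generated_by (rels p) ((stabA p).comap (φ p)) hgen g

end MikhailovAux

namespace MikhailovAux2
open MikhailovGroup MikhailovAux Subgroup
open scoped commutatorElement

variable (p : ℕ)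

instance A_normal : (A p).Normal := ⟨fun a ha q => (mem_stabA p q).2 a ha⟩

instance H_normal : (H p).Normal := by unfold MikhailovGroup.H; infer_instance

lemma H_le_comap : H p ≤ (A p).comap (φ p) := by
  haveI : ((A p).comap (φ p)).Normal := (A_normal p).comap (φ p)
  refine normalClosure_le_normal ?_
  rintro g (rfl | rfl)
  · show φ p (x p) ∈ A p
    rw [phi_x]; exact one_mem _
  · show φ p (y p) ∈ A p
    rw [phi_y]; exact subset_closure ⟨0, rfl⟩

lemma commutator_H_le_N : ⁅H p, H p⁆ ≤ N p := by
  rw [Subgroup.commutator_le]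
  intro a ha b hb
  have h1 : φ p ⁅a, b⁆ = 1 := by
    rw [map_commutatorElement]
    exact commutatorElement_eq_one_iff_commute.2
      (A_comm p _ (H_le_comap p ha) _ (H_le_comap p hb))
  have : ⁅a, b⁆ ∈ (φ p).ker := h1
  rwa [φ, QuotientGroup.ker_mk'] at this

lemma commutator_N_eq_bot : ⁅N p, N p⁆ = ⊥ := by
  rw [eq_bot_iff, Subgroup.commutator_le]
  intro a ha b hb
  exact Subgroup.mem_bot.2 (commutatorElement_eq_one_iff_commute.2 (N_comm p a ha b hb))

def ψ : G p →* G p ⧸ H p := QuotientGroup.mk' (H p)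

lemma psi_zpowers (g : G p) : ψ p g ∈ zpowers (ψ p (t p)) := by
  refine PresentedGroup.generated_by (rels p) ((zpowers (ψ p (t p))).comap (ψ p)) ?_ g
  intro j
  fin_cases j
  · show ψ p (x p) ∈ zpowers (ψ p (t p))
    have hx : x p ∈ H p := subset_normalClosure (Set.mem_insert _ _)
    have : ψ p (x p) = 1 := by
      have h : x p ∈ (ψ p).ker := by rw [ψ, QuotientGroup.ker_mk']; exact hx
      exact h
    rw [this]; exact one_mem _
  · show ψ p (y p) ∈ zpowers (ψ p (t p))
    have hy : y p ∈ H p := subset_normalClosure (Set.mem_insert_of_mem _ rfl)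
    have : ψ p (y p) = 1 := by
      have h : y p ∈ (ψ p).ker := by rw [ψ, QuotientGroup.ker_mk']; exact hy
      exact h
    rw [this]; exact one_mem _
  · exact mem_zpowers _

lemma derived_one_le_H : derivedSeries (G p) 1 ≤ H p := by
  rw [derivedSeries_succ, derivedSeries_zero, Subgroup.commutator_le]
  intro a _ b _
  obtain ⟨m, hm⟩ := mem_zpowers_iff.1 (psi_zpowers p a)
  obtain ⟨n, hn⟩ := mem_zpowers_iff.1 (psi_zpowers p b)
  have hcom : Commute (ψ p a) (ψ p b) := by
    rw [← hm, ← hn]; exact Commute.zpow_zpow_self _ _ _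
  have h1 : ψ p ⁅a, b⁆ = 1 := by
    rw [map_commutatorElement]
    exact commutatorElement_eq_one_iff_commute.2 hcom
  have : ⁅a, b⁆ ∈ (ψ p).ker := h1
  rwa [ψ, QuotientGroup.ker_mk'] at this

theorem main : derivedSeries ↥(H p) 2 = ⊥ ∧ derivedSeries (G p) 3 = ⊥ := by
  have e0 : Subgroup.map (H p).subtype (derivedSeries ↥(H p) 0) = H p := by
    rw [derivedSeries_zero, ← MonoidHom.range_eq_map, Subgroup.range_subtype]
  have e1 : Subgroup.map (H p).subtype (derivedSeries ↥(H p) 1) = ⁅H p, H p⁆ := by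
    rw [derivedSeries_succ, Subgroup.map_commutator, e0]
  have e2 : Subgroup.map (H p).subtype (derivedSeries ↥(H p) 2) ≤ ⊥ := by
    rw [derivedSeries_succ, Subgroup.map_commutator, e1, ← commutator_N_eq_bot p]
    exact Subgroup.commutator_mono (commutator_H_le_N p) (commutator_H_le_N p)
  constructor
  · rw [← le_bot_iff]
    intro g hg
    have := e2 (Subgroup.mem_map_of_mem (H p).subtype hg)
    rw [Subgroup.mem_bot] at this ⊢
    exact Subtype.ext this
  · have h2 : derivedSeries (G p) 2 ≤ N p := by
      rw [derivedSeries_succ]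
      exact le_trans (Subgroup.commutator_mono (derived_one_le_H p) (derived_one_le_H p))
        (commutator_H_le_N p)
    rw [← le_bot_iff, show (3 : ℕ) = 2 + 1 from rfl, derivedSeries_succ,
      ← commutator_N_eq_bot p]
    exact Subgroup.commutator_mono h2 h2

end MikhailovAux2


open MikhailovGroup in
/-- the normal closure `H` of `{x, y}` in `G` is metabelian, and `G` is
solvable of derived length at most `3`. -/
theorem mikhailov_H_metabelian_G_solvable (p : ℕ) (hp : p.Prime) :
    derivedSeries ↥(H p) 2 = ⊥ ∧ derivedSeries (G p) 3 = ⊥ := by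
  exact MikhailovAux2.main p
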